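/- Suppose ‖ad_H^r(B)‖ ≤ c₀^r · r! for all r ≥ 0 with c₀ > 0. Then for any complex s = a + ib with |b| < 1/c₀, the analytically continued Heisenberg evolution B(s) = Σ_{r≥0} (is)^r/r! · ad_H^r(B) converges with ‖B(ib)‖ ≤ 1/(1 − c₀|b|), and hence ‖e^{iHa} B(ib) e^{−iHa}‖ ≤ 1/(1 − c₀|b|) when H is Hermitian and a is real. -/

import Mathlib

open scoped Matrix.Norms.L2Operator

/-- Convergence of analytically continued Heisenberg evolution: if
`‖ad_H^r(B)‖ ≤ c₀^r r!` for all `r`, then for `s = a + ib` with `|b| < 1/c₀` the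
series `B(ib) = Σ_r (i·(ib))^r/r! · ad_H^r(B)` converges with
`‖B(ib)‖ ≤ 1/(1 - c₀|b|)`, and for Hermitian `H` and real `a`, conjugating by the
unitary `e^{iHa}` preserves the bound:
`‖e^{iHa} B(ib) e^{-iHa}‖ ≤ 1/(1 - c₀|b|)`. -/
theorem heisenberg_series_bound (N : ℕ)
    (H B : Matrix (Fin N) (Fin N) ℂ) (hH : H.IsHermitian) (hB : ‖B‖ ≤ 1)
    (c₀ : ℝ) (hc₀ : 0 < c₀)
    (had : ∀ r : ℕ, ‖(fun X => H * X - X * H)^[r] B‖ ≤ c₀ ^ r * (r.factorial : ℝ))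
    (a b : ℝ) (hb : |b| < 1 / c₀) :
    Summable (fun r : ℕ =>
      ((Complex.I * (Complex.I * (b : ℂ))) ^ r / (r.factorial : ℂ)) •
        (fun X => H * X - X * H)^[r] B) ∧
    ‖∑' r : ℕ, ((Complex.I * (Complex.I * (b : ℂ))) ^ r / (r.factorial : ℂ)) •
        (fun X => H * X - X * H)^[r] B‖ ≤ 1 / (1 - c₀ * |b|) ∧
    ‖NormedSpace.exp ((Complex.I * (a : ℂ)) • H) *
        (∑' r : ℕ, ((Complex.I * (Complex.I * (b : ℂ))) ^ r / (r.factorial : ℂ)) •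
          (fun X => H * X - X * H)^[r] B) *
        NormedSpace.exp (-((Complex.I * (a : ℂ)) • H))‖ ≤ 1 / (1 - c₀ * |b|) := by
  have hcb : c₀ * |b| < 1 := by
    have := (lt_div_iff₀ hc₀).mp hb
    linarith [mul_comm c₀ |b|]
  have hcb0 : 0 ≤ c₀ * |b| := mul_nonneg hc₀.le (abs_nonneg b)
  -- norm bound on each term
  have hterm : ∀ r : ℕ,
      ‖((Complex.I * (Complex.I * (b : ℂ))) ^ r / (r.factorial : ℂ)) •
        (fun X => H * X - X * H)^[r] B‖ ≤ (c₀ * |b|) ^ r := by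
    intro r
    have hfac : (0 : ℝ) < (r.factorial : ℝ) := by exact_mod_cast r.factorial_pos
    have hnorm : ‖(Complex.I * (Complex.I * (b : ℂ))) ^ r / (r.factorial : ℂ)‖
        = |b| ^ r / (r.factorial : ℝ) := by
      rw [norm_div, norm_pow]
      congr 1
      · congr 1
        simp [Complex.norm_I]
      · simp [Complex.norm_natCast]
    rw [norm_smul, hnorm]
    calc |b| ^ r / (r.factorial : ℝ) * ‖(fun X => H * X - X * H)^[r] B‖
        ≤ |b| ^ r / (r.factorial : ℝ) * (c₀ ^ r * (r.factorial : ℝ)) := by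
          apply mul_le_mul_of_nonneg_left (had r)
          positivity
      _ = (c₀ * |b|) ^ r := by
          field_simp [mul_pow]
          ring
  have hgeo : Summable (fun r : ℕ => (c₀ * |b|) ^ r) :=
    summable_geometric_of_lt_one hcb0 hcb
  have hsum : Summable (fun r : ℕ =>
      ((Complex.I * (Complex.I * (b : ℂ))) ^ r / (r.factorial : ℂ)) •
        (fun X => H * X - X * H)^[r] B) :=
    Summable.of_norm_bounded hgeo hterm
  have htsum : ‖∑' r : ℕ, ((Complex.I * (Complex.I * (b : ℂ))) ^ r / (r.factorial : ℂ)) •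
        (fun X => H * X - X * H)^[r] B‖ ≤ 1 / (1 - c₀ * |b|) := by
    calc ‖∑' r : ℕ, ((Complex.I * (Complex.I * (b : ℂ))) ^ r / (r.factorial : ℂ)) •
          (fun X => H * X - X * H)^[r] B‖
        ≤ ∑' r : ℕ, (c₀ * |b|) ^ r := tsum_of_norm_bounded hgeo.hasSum hterm
      _ = (1 - c₀ * |b|)⁻¹ := tsum_geometric_of_lt_one hcb0 hcb
      _ = 1 / (1 - c₀ * |b|) := (one_div _).symm
  refine ⟨hsum, htsum, ?_⟩
  -- unitarity of the conjugation
  set A : Matrix (Fin N) (Fin N) ℂ := (Complex.I * (a : ℂ)) • H with hA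
  have hskew : A ∈ skewAdjoint (Matrix (Fin N) (Fin N) ℂ) := by
    rw [skewAdjoint.mem_iff]
    simp only [hA, star_smul, Matrix.star_eq_conjTranspose, hH.eq]
    rw [← neg_smul]
    congr 1
    simp [Complex.ext_iff]
  let +nondep : NormedAlgebra ℚ (Matrix (Fin N) (Fin N) ℂ) :=
    .restrictScalars ℚ ℂ (Matrix (Fin N) (Fin N) ℂ)
  have hU : NormedSpace.exp A ∈ unitary (Matrix (Fin N) (Fin N) ℂ) :=
    NormedSpace.exp_mem_unitary_of_mem_skewAdjoint hskew
  have hVU : NormedSpace.exp (-A) = star (NormedSpace.exp A) := by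
    rw [NormedSpace.star_exp, skewAdjoint.mem_iff.mp hskew]
  rw [hVU, CStarRing.norm_mul_mem_unitary _ (Unitary.star_mem hU),
    CStarRing.norm_mem_unitary_mul _ hU]
  exact htsum
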